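/- Define g(n) = 10^{n/5} and define f(n) by: f(n) = binom(n,2) for 1 ≤ n ≤ 8; f(n) = binom(⌊n/2⌋,2)·binom(⌈n/2⌉,2) − (⌊n/2⌋−1)(⌈n/2⌉−1) + 1 for 9 ≤ n ≤ 13; f(n) = 10^{(n-1)/5} + ((n+144)/30)·6^{(n-6)/5} for 14 ≤ n ≤ 30; f(n) = 10^{(n-1)/5} + ((n-1)/5)·6^{(n-6)/5} for n ≥ 31. Then for every positive integer n ≠ 5, f(n)/g(n) ≤ f(4)/g(4) < 0.9510. -/
import Mathlib

/-- `g n = 10 ^ (n/5)` (real power). -/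
noncomputable def g (n : ℕ) : ℝ := (10 : ℝ) ^ ((n : ℝ) / 5)

/-- The four-piece function `f` from the main theorem. -/
noncomputable def f (n : ℕ) : ℝ :=
  if n ≤ 8 then (n.choose 2 : ℝ)
  else if n ≤ 13 then
    ((n / 2).choose 2 : ℝ) * (((n + 1) / 2).choose 2 : ℝ)
      - (((n / 2 : ℕ) : ℝ) - 1) * ((((n + 1) / 2 : ℕ) : ℝ) - 1) + 1
  else if n ≤ 30 then
    (10 : ℝ) ^ (((n : ℝ) - 1) / 5) + (((n : ℝ) + 144) / 30) * (6 : ℝ) ^ (((n : ℝ) - 6) / 5)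
  else
    (10 : ℝ) ^ (((n : ℝ) - 1) / 5) + (((n : ℝ) - 1) / 5) * (6 : ℝ) ^ (((n : ℝ) - 6) / 5)

private lemma rpow_pow5 (x : ℝ) (hx : 0 ≤ x) (p : ℝ) : (x ^ p) ^ (5:ℕ) = x ^ (p * 5) := by
  rw [← Real.rpow_natCast (x ^ p) 5, ← Real.rpow_mul hx]; norm_num

private lemma cmp_le (a b p q : ℝ) (i j : ℕ) (ha : 0 ≤ a) (hb : 0 ≤ b)
    (hp : p * 5 = i) (hq : q * 5 = j) (h : a ^ 5 * 10 ^ i ≤ b ^ 5 * 10 ^ j) :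
    a * (10:ℝ) ^ p ≤ b * (10:ℝ) ^ q := by
  have h10 : (0:ℝ) ≤ 10 := by norm_num
  have hap : 0 ≤ a * (10:ℝ) ^ p := mul_nonneg ha (Real.rpow_nonneg h10 p)
  have hbq : 0 ≤ b * (10:ℝ) ^ q := mul_nonneg hb (Real.rpow_nonneg h10 q)
  refine (pow_le_pow_iff_left₀ hap hbq (by norm_num : (5:ℕ) ≠ 0)).mp ?_
  rw [mul_pow, mul_pow, rpow_pow5 _ h10, rpow_pow5 _ h10, hp, hq,
    Real.rpow_natCast, Real.rpow_natCast]
  exact h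

private lemma cmp_lt (a b p q : ℝ) (i j : ℕ) (ha : 0 ≤ a) (hb : 0 ≤ b)
    (hp : p * 5 = i) (hq : q * 5 = j) (h : a ^ 5 * 10 ^ i < b ^ 5 * 10 ^ j) :
    a * (10:ℝ) ^ p < b * (10:ℝ) ^ q := by
  have h10 : (0:ℝ) ≤ 10 := by norm_num
  have hap : 0 ≤ a * (10:ℝ) ^ p := mul_nonneg ha (Real.rpow_nonneg h10 p)
  have hbq : 0 ≤ b * (10:ℝ) ^ q := mul_nonneg hb (Real.rpow_nonneg h10 q)
  refine (pow_lt_pow_iff_left₀ hap hbq (by norm_num : (5:ℕ) ≠ 0)).mp ?_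
  rw [mul_pow, mul_pow, rpow_pow5 _ h10, rpow_pow5 _ h10, hp, hq,
    Real.rpow_natCast, Real.rpow_natCast]
  exact h

private lemma rpow_le_num (x : ℝ) (hx : 0 ≤ x) (p c : ℝ) (i : ℕ) (hp : p * 5 = i)
    (hc : 0 ≤ c) (h : x ^ i ≤ c ^ 5) : x ^ p ≤ c := by
  refine (pow_le_pow_iff_left₀ (Real.rpow_nonneg hx p) hc (by norm_num : (5:ℕ) ≠ 0)).mp ?_
  rw [rpow_pow5 _ hx, hp, Real.rpow_natCast]
  exact h

private lemma f4 : f 4 = 6 := by norm_num [f, Nat.choose]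

theorem f_div_g_le_of_ne_five :
    (∀ n : ℕ, 1 ≤ n → n ≠ 5 → f n / g n ≤ f 4 / g 4) ∧ f 4 / g 4 < 0.9510 := by
  have hg4 : 0 < g 4 := Real.rpow_pos_of_pos (by norm_num) _
  constructor
  · intro n hn hne
    have hgn : 0 < g n := Real.rpow_pos_of_pos (by norm_num) _
    rw [div_le_div_iff₀ hgn hg4, f4]
    simp only [g]
    by_cases h13 : n ≤ 13
    · interval_cases n
      · have hf : f 1 = 0 := by norm_num [f, Nat.choose]
        rw [hf, zero_mul]
        positivity
      · have hf : f 2 = 1 := by norm_num [f, Nat.choose]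
        rw [hf]
        exact cmp_le 1 6 _ _ 4 2 (by norm_num) (by norm_num) (by push_cast; norm_num) (by push_cast; norm_num) (by norm_num)
      · have hf : f 3 = 3 := by norm_num [f, Nat.choose]
        rw [hf]
        exact cmp_le 3 6 _ _ 4 3 (by norm_num) (by norm_num) (by push_cast; norm_num) (by push_cast; norm_num) (by norm_num)
      · have hf : f 4 = 6 := by norm_num [f, Nat.choose]
        rw [hf]
      · exact absurd rfl hne
      · have hf : f 6 = 15 := by norm_num [f, Nat.choose]
        rw [hf]
        exact cmp_le 15 6 _ _ 4 6 (by norm_num) (by norm_num) (by push_cast; norm_num) (by push_cast; norm_num) (by norm_num)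
      · have hf : f 7 = 21 := by norm_num [f, Nat.choose]
        rw [hf]
        exact cmp_le 21 6 _ _ 4 7 (by norm_num) (by norm_num) (by push_cast; norm_num) (by push_cast; norm_num) (by norm_num)
      · have hf : f 8 = 28 := by norm_num [f, Nat.choose]
        rw [hf]
        exact cmp_le 28 6 _ _ 4 8 (by norm_num) (by norm_num) (by push_cast; norm_num) (by push_cast; norm_num) (by norm_num)
      · have hf : f 9 = 49 := by norm_num [f, Nat.choose]
        rw [hf]
        exact cmp_le 49 6 _ _ 4 9 (by norm_num) (by norm_num) (by push_cast; norm_num) (by push_cast; norm_num) (by norm_num)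
      · have hf : f 10 = 85 := by norm_num [f, Nat.choose]
        rw [hf]
        exact cmp_le 85 6 _ _ 4 10 (by norm_num) (by norm_num) (by push_cast; norm_num) (by push_cast; norm_num) (by norm_num)
      · have hf : f 11 = 131 := by norm_num [f, Nat.choose]
        rw [hf]
        exact cmp_le 131 6 _ _ 4 11 (by norm_num) (by norm_num) (by push_cast; norm_num) (by push_cast; norm_num) (by norm_num)
      · have hf : f 12 = 201 := by norm_num [f, Nat.choose]
        rw [hf]
        exact cmp_le 201 6 _ _ 4 12 (by norm_num) (by norm_num) (by push_cast; norm_num) (by push_cast; norm_num) (by norm_num)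
      · have hf : f 13 = 286 := by norm_num [f, Nat.choose]
        rw [hf]
        exact cmp_le 286 6 _ _ 4 13 (by norm_num) (by norm_num) (by push_cast; norm_num) (by push_cast; norm_num) (by norm_num)
    · -- n ≥ 14
      push_neg at h13
      have hn14 : (14:ℝ) ≤ (n:ℝ) := by exact_mod_cast h13
      set t : ℝ := ((n:ℝ) - 6) / 5 with htdef
      have ht0 : (8:ℝ)/5 ≤ t := by rw [htdef]; linarith
      have htnn : (0:ℝ) ≤ t := by linarith
      have hPnn : (0:ℝ) ≤ (10:ℝ) ^ t := Real.rpow_nonneg (by norm_num) t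
      have e6 : (6:ℝ) ^ t = ((3:ℝ)/5) ^ t * (10:ℝ) ^ t := by
        rw [← Real.mul_rpow (by norm_num) (by norm_num)]; norm_num
      have h35nn : (0:ℝ) ≤ ((3:ℝ)/5) ^ t := Real.rpow_nonneg (by norm_num) t
      have hkey : f n ≤ 63/5 * (10:ℝ) ^ t := by
        have e1 : ((n:ℝ) - 1) / 5 = t + 1 := by rw [htdef]; ring
        by_cases h30 : n ≤ 30
        · have hfn : f n = (10:ℝ) ^ (((n:ℝ) - 1)/5)
              + (((n:ℝ) + 144)/30) * (6:ℝ) ^ (((n:ℝ) - 6)/5) := by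
            simp only [f]
            rw [if_neg (by omega), if_neg (by omega), if_pos h30]
          rw [hfn, e1, Real.rpow_add_one (by norm_num : (10:ℝ) ≠ 0)]
          have hcn : ((n:ℝ) + 144)/30 ≤ 29/5 := by
            have : (n:ℝ) ≤ 30 := by exact_mod_cast h30
            linarith
          have hcnn : (0:ℝ) ≤ ((n:ℝ) + 144)/30 := by positivity
          have h35 : ((3:ℝ)/5) ^ t ≤ 221/500 := by
            refine le_trans (Real.rpow_le_rpow_of_exponent_ge (by norm_num) (by norm_num) ht0) ?_
            exact rpow_le_num _ (by norm_num) _ _ 8 (by norm_num) (by norm_num) (by norm_num)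
          have hb : ((n:ℝ) + 144)/30 * ((3:ℝ)/5) ^ t ≤ 13/5 := by
            calc ((n:ℝ) + 144)/30 * ((3:ℝ)/5) ^ t ≤ 29/5 * (221/500) :=
                  mul_le_mul hcn h35 h35nn (by norm_num)
              _ ≤ 13/5 := by norm_num
          have := mul_le_mul_of_nonneg_right hb hPnn
          rw [show ((n:ℝ) - 6)/5 = t from rfl, e6]
          nlinarith [hPnn]
        · push_neg at h30
          have hfn : f n = (10:ℝ) ^ (((n:ℝ) - 1)/5)
              + (((n:ℝ) - 1)/5) * (6:ℝ) ^ (((n:ℝ) - 6)/5) := by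
            simp only [f]
            rw [if_neg (by omega), if_neg (by omega), if_neg (by omega)]
          rw [hfn, e1, Real.rpow_add_one (by norm_num : (10:ℝ) ≠ 0)]
          -- bound (t+1) * (3/5)^t ≤ 13/5
          have hlog : (2:ℝ)/5 ≤ Real.log (5/3) := by
            have h1 := Real.log_le_sub_one_of_pos (show (0:ℝ) < 3/5 by norm_num)
            have h2 : Real.log ((5:ℝ)/3) = - Real.log (3/5) := by
              rw [← Real.log_inv]; norm_num
            linarith
          have hexp : 1 + (2:ℝ)/5 * t ≤ ((5:ℝ)/3) ^ t := by
            have h0 : ((5:ℝ)/3) ^ t = Real.exp (Real.log (5/3) * t) := by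
              rw [Real.rpow_def_of_pos (by norm_num)]
            have h1 := Real.add_one_le_exp (Real.log (5/3) * t)
            have h2 : (2:ℝ)/5 * t ≤ Real.log (5/3) * t :=
              mul_le_mul_of_nonneg_right hlog htnn
            rw [h0]; linarith
          have hpos : (0:ℝ) < ((5:ℝ)/3) ^ t := Real.rpow_pos_of_pos (by norm_num) t
          have hs : ((3:ℝ)/5) ^ t = (((5:ℝ)/3) ^ t)⁻¹ := by
            rw [show (3:ℝ)/5 = ((5:ℝ)/3)⁻¹ by norm_num, Real.inv_rpow (by norm_num)]
          have hb : (t + 1) * ((3:ℝ)/5) ^ t ≤ 13/5 := by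
            rw [hs, ← div_eq_mul_inv, div_le_iff₀ hpos]
            nlinarith [hexp]
          have := mul_le_mul_of_nonneg_right hb hPnn
          rw [show ((n:ℝ) - 6)/5 = t from rfl, e6]
          nlinarith [hPnn]
      have hfinal : 63/5 * (10:ℝ) ^ t * (10:ℝ) ^ (((4:ℕ):ℝ)/5) ≤ 6 * (10:ℝ) ^ ((n:ℝ)/5) := by
        have en : (n:ℝ)/5 = t + 6/5 := by rw [htdef]; ring
        rw [en, Real.rpow_add (by norm_num : (0:ℝ) < 10)]
        have hc : (63/5 : ℝ) * (10:ℝ) ^ (((4:ℕ):ℝ)/5) ≤ 6 * (10:ℝ) ^ ((6:ℝ)/5) :=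
          cmp_le _ _ _ _ 4 6 (by norm_num) (by norm_num) (by norm_num) (by norm_num)
            (by norm_num)
        calc 63/5 * (10:ℝ) ^ t * (10:ℝ) ^ (((4:ℕ):ℝ)/5)
            = (10:ℝ) ^ t * (63/5 * (10:ℝ) ^ (((4:ℕ):ℝ)/5)) := by ring
          _ ≤ (10:ℝ) ^ t * (6 * (10:ℝ) ^ ((6:ℝ)/5)) := mul_le_mul_of_nonneg_left hc hPnn
          _ = 6 * ((10:ℝ) ^ t * (10:ℝ) ^ ((6:ℝ)/5)) := by ring
      calc f n * (10:ℝ) ^ (((4:ℕ):ℝ)/5)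
          ≤ 63/5 * (10:ℝ) ^ t * (10:ℝ) ^ (((4:ℕ):ℝ)/5) :=
            mul_le_mul_of_nonneg_right hkey (Real.rpow_nonneg (by norm_num) _)
        _ ≤ 6 * (10:ℝ) ^ ((n:ℝ)/5) := hfinal
  · rw [div_lt_iff₀ hg4, f4]
    simp only [g]
    have h6 : (6:ℝ) = 6 * (10:ℝ) ^ ((0:ℝ)) := by rw [Real.rpow_zero]; ring
    rw [h6]
    exact cmp_lt 6 0.9510 _ _ 0 4 (by norm_num) (by norm_num) (by norm_num) (by norm_num)
      (by norm_num)
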